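/- Let d, j, h be integers with d > j > 0 and |h| ≥ 3, and let ε be a real number with 1/|h| < ε < 1 − 1/|h|. Then the polynomial f_{d,j,h}(x) = x^d − h x^j + 1 has exactly d − j complex roots (counted with multiplicity) z satisfying ((1−ε)|h|)^{1/(d−j)} < |z| < ((1+ε)|h|)^{1/(d−j)}, and exactly j complex roots (counted with multiplicity) z satisfying ((1+ε)|h|)^{−1/j} < |z| < ((1−ε)|h|)^{−1/j}. -/

import Mathlib

open Polynomial Metric Complex Set

noncomputable section TrinomialAux

lemma circleIntegral_add' {f g : ℂ → ℂ} {c : ℂ} {R : ℝ}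
    (hf : CircleIntegrable f c R) (hg : CircleIntegrable g c R) :
    (∮ z in C(c, R), (f z + g z)) = (∮ z in C(c, R), f z) + ∮ z in C(c, R), g z := by
  simp only [circleIntegral, smul_add, intervalIntegral.integral_add hf.out hg.out]

lemma circleIntegrable_single {r : ℂ} (hr : ‖r‖ ≠ 1) :
    CircleIntegrable (fun z => (z - r)⁻¹) 0 1 := by
  refine ContinuousOn.circleIntegrable zero_le_one ?_
  refine (continuousOn_id.sub continuousOn_const).inv₀ ?_
  intro z hz
  rw [mem_sphere_zero_iff_norm] at hz
  refine sub_ne_zero.2 fun hzr => hr ?_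
  simp only [id] at hzr; rw [← hzr]; simpa using hz

lemma integral_single {r : ℂ} (hr : ‖r‖ ≠ 1) :
    (∮ z in C(0, 1), (z - r)⁻¹) =
      if ‖r‖ < 1 then 2 * Real.pi * I else 0 := by
  rcases lt_or_gt_of_ne hr with hlt | hgt
  · rw [if_pos hlt]
    exact circleIntegral.integral_sub_inv_of_mem_ball (by simpa [mem_ball_zero_iff] using hlt)
  · rw [if_neg (by linarith)]
    refine Complex.circleIntegral_eq_zero_of_differentiable_on_off_countable zero_le_one
      Set.countable_empty ?_ ?_
    · refine (continuousOn_id.sub continuousOn_const).inv₀ ?_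
      intro z hz
      rw [mem_closedBall_zero_iff] at hz
      refine sub_ne_zero.2 fun hzr => ?_
      rw [show z = r from hzr] at hz
      linarith
    · intro z hz
      refine ((differentiableAt_id.sub (differentiableAt_const r)).inv ?_)
      refine sub_ne_zero.2 fun hzr => ?_
      have := hz.1
      rw [mem_ball_zero_iff, show z = r from hzr] at this
      linarith

lemma multiset_integral (S : Multiset ℂ) (hS : ∀ r ∈ S, ‖r‖ ≠ 1) :
    CircleIntegrable (fun z => (S.map (fun r => (z - r)⁻¹)).sum) 0 1 ∧
    (∮ z in C(0, 1), (S.map (fun r => (z - r)⁻¹)).sum) =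
      (2 * Real.pi * I) * (Multiset.card (S.filter (fun r => ‖r‖ < 1)) : ℂ) := by
  classical
  induction S using Multiset.induction_on with
  | empty =>
      constructor
      · simpa using circleIntegrable_const (0 : ℂ) 0 1
      · simp [circleIntegral]
  | cons r S ih =>
      have hr : ‖r‖ ≠ 1 := hS r (Multiset.mem_cons_self r S)
      have hS' : ∀ a ∈ S, ‖a‖ ≠ 1 := fun a ha => hS a (Multiset.mem_cons_of_mem ha)
      obtain ⟨hint, hval⟩ := ih hS'
      have h1 := circleIntegrable_single hr
      constructor
      · simpa only [Multiset.map_cons, Multiset.sum_cons, Pi.add_def] using h1.add hint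
      · simp only [Multiset.map_cons, Multiset.sum_cons]
        rw [circleIntegral_add' h1 hint, hval, integral_single hr, Multiset.filter_cons]
        by_cases hlt : ‖r‖ < 1
        · rw [if_pos hlt, if_pos hlt]
          simp only [Multiset.card_add, Multiset.card_singleton]
          push_cast
          ring
        · rw [if_neg hlt, if_neg hlt]
          simp


lemma eval_derivative_prod (S : Multiset ℂ) (z : ℂ) (hz : ∀ r ∈ S, z ≠ r) :
    eval z (derivative (S.map (fun a => (X : ℂ[X]) - C a)).prod) =
      eval z (S.map (fun a => (X : ℂ[X]) - C a)).prod *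
        (S.map (fun r => (z - r)⁻¹)).sum := by
  induction S using Multiset.induction_on with
  | empty => simp
  | cons r S ih =>
      have hzr : z - r ≠ 0 := sub_ne_zero.2 (hz r (Multiset.mem_cons_self r S))
      have ih' := ih (fun a ha => hz a (Multiset.mem_cons_of_mem ha))
      simp only [Multiset.map_cons, Multiset.prod_cons, Multiset.sum_cons, derivative_mul,
        derivative_sub, derivative_X, derivative_C, sub_zero, one_mul, eval_add, eval_mul,
        eval_sub, eval_X, eval_C]
      rw [ih']
      field_simp

section family

variable {d j : ℕ} {h : ℤ}

/-- the family member -/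
def pf (d j : ℕ) (h : ℤ) (c : ℂ) : ℂ[X] := X ^ d - C (h : ℂ) * X ^ j + C c

lemma pf_deg_aux (hjd : j < d) (c : ℂ) :
    degree (-(C (h : ℂ) * X ^ j) + C c) < degree ((X : ℂ[X]) ^ d) := by
  rw [degree_X_pow]
  refine lt_of_le_of_lt (degree_add_le _ _) (max_lt ?_ ?_)
  · rw [degree_neg]
    exact lt_of_le_of_lt (degree_C_mul_X_pow_le _ _) (by exact_mod_cast hjd)
  · refine lt_of_le_of_lt degree_C_le ?_
    exact_mod_cast pos_of_gt hjd

lemma pf_eq (c : ℂ) : pf d j h c = X ^ d + (-(C (h : ℂ) * X ^ j) + C c) := by rw [pf]; ring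

lemma pf_monic (hjd : j < d) (c : ℂ) : (pf d j h c).Monic := by
  rw [pf_eq]
  exact (monic_X_pow d).add_of_left (pf_deg_aux hjd c)

lemma pf_degree (hjd : j < d) (c : ℂ) : (pf d j h c).degree = d := by
  rw [pf_eq, degree_add_eq_left_of_degree_lt (pf_deg_aux hjd c), degree_X_pow]

lemma pf_natDegree (hjd : j < d) (c : ℂ) : (pf d j h c).natDegree = d :=
  natDegree_eq_of_degree_eq_some (pf_degree hjd c)

lemma pf_card_roots (hjd : j < d) (c : ℂ) : Multiset.card (pf d j h c).roots = d := by
  have := (splits_iff_card_roots (f := pf d j h c)).1 (IsAlgClosed.splits _)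
  rw [this, pf_natDegree hjd c]

lemma pf_eval (c : ℂ) (z : ℂ) : eval z (pf d j h c) = z ^ d - h * z ^ j + c := by
  simp [pf]

lemma pf_no_circle_root (hh : 3 ≤ |h|) {t : ℝ} (ht0 : 0 ≤ t) (ht1 : t ≤ 1) {z : ℂ}
    (hz : ‖z‖ = 1) : eval z (pf d j h (t : ℂ)) ≠ 0 := by
  rw [pf_eval]
  intro H
  have hE : (h : ℂ) * z ^ j = z ^ d + t := by linear_combination -H
  have h2 : ‖(h : ℂ) * z ^ j‖ = |(h : ℝ)| := by
    simp [norm_mul, norm_pow, hz, Complex.norm_intCast]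
  have h3 : ‖(z : ℂ) ^ d + t‖ ≤ 2 := by
    refine le_trans (norm_add_le _ _) ?_
    have e1 : ‖(z : ℂ) ^ d‖ = 1 := by simp [norm_pow, hz]
    have e2 : ‖(t : ℂ)‖ = t := by
      rw [Complex.norm_real, Real.norm_eq_abs, _root_.abs_of_nonneg ht0]
    rw [e1, e2]; linarith
  have h4 : |(h : ℝ)| ≤ 2 := by
    calc |(h : ℝ)| = ‖(h : ℂ) * z ^ j‖ := h2.symm
      _ = ‖z ^ d + (t : ℂ)‖ := by rw [hE]
      _ ≤ 2 := h3
  have h5 : (3 : ℝ) ≤ |(h : ℝ)| := by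
    rw [← Int.cast_abs]; exact_mod_cast hh
  linarith

end family


section family2

variable {d j : ℕ} {h : ℤ}

lemma pf_roots_ne_circle (hh : 3 ≤ |h|) {t : ℝ} (ht0 : 0 ≤ t) (ht1 : t ≤ 1) :
    ∀ r ∈ (pf d j h (t : ℂ)).roots, ‖r‖ ≠ 1 := by
  intro r hr h1
  exact pf_no_circle_root hh ht0 ht1 h1 ((mem_roots'.1 hr).2)

lemma pf_count_integral (hjd : j < d) (hh : 3 ≤ |h|) {t : ℝ} (ht0 : 0 ≤ t) (ht1 : t ≤ 1) :
    (∮ z in C(0, 1),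
        eval z (derivative (pf d j h (t : ℂ))) / eval z (pf d j h (t : ℂ))) =
      (2 * Real.pi * I) *
        (Multiset.card ((pf d j h (t : ℂ)).roots.filter
          (fun r => ‖r‖ < 1)) : ℂ) := by
  set q := pf d j h (t : ℂ) with hqdef
  have hq : q = ((q.roots).map (fun a => (X : ℂ[X]) - C a)).prod :=
    (IsAlgClosed.splits _).eq_prod_roots_of_monic (pf_monic hjd _)
  have hroots_ne : ∀ r ∈ q.roots, ‖r‖ ≠ 1 := pf_roots_ne_circle hh ht0 ht1
  have heq : EqOn (fun z => eval z (derivative q) / eval z q)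
      (fun z => ((q.roots).map (fun r => (z - r)⁻¹)).sum) (sphere (0 : ℂ) 1) := by
    intro z hz
    rw [mem_sphere_zero_iff_norm] at hz
    have hz' : ‖z‖ = 1 := hz
    have hne : eval z q ≠ 0 := pf_no_circle_root hh ht0 ht1 hz'
    have hzr : ∀ r ∈ q.roots, z ≠ r := by
      intro r hr hzr
      exact hne (by rw [hzr]; exact (mem_roots'.1 hr).2)
    have hkey := eval_derivative_prod q.roots z hzr
    rw [← hq] at hkey
    simp only
    rw [hkey, mul_comm, mul_div_assoc, div_self hne, mul_one]
  rw [circleIntegral.integral_congr zero_le_one heq]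
  exact (multiset_integral q.roots hroots_ne).2

lemma pf_derivative_indep (c : ℂ) :
    derivative (pf d j h c) = derivative (pf d j h 0) := by
  simp [pf, derivative_add, derivative_sub, derivative_C]

lemma pf_count_const (hjd : j < d) (hh : 3 ≤ |h|) :
    Multiset.card ((pf d j h ((1 : ℝ) : ℂ)).roots.filter (fun r => ‖r‖ < 1)) =
      Multiset.card ((pf d j h ((0 : ℝ) : ℂ)).roots.filter (fun r => ‖r‖ < 1)) := by
  classical
  set n : ℝ → ℕ := fun t =>
    Multiset.card ((pf d j h (t : ℂ)).roots.filter (fun r => ‖r‖ < 1)) with hn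
  set num : ℂ → ℂ := fun z => eval z (derivative (pf d j h 0)) with hnum
  set g : (Icc (0:ℝ) 1) → ℝ → ℂ := fun t θ =>
    (circleMap 0 1 θ * I) * (num (circleMap 0 1 θ) /
      ((circleMap 0 1 θ) ^ d - (h : ℂ) * (circleMap 0 1 θ) ^ j + ((t : ℝ) : ℂ))) with hg
  have hG : ∀ t : Icc (0:ℝ) 1, (∫ θ in (0:ℝ)..(2 * Real.pi), g t θ) =
      ∮ z in C(0, 1),
        eval z (derivative (pf d j h ((t : ℝ) : ℂ))) / eval z (pf d j h ((t : ℝ) : ℂ)) := by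
    intro t
    rw [circleIntegral]
    refine intervalIntegral.integral_congr fun θ _ => ?_
    rw [deriv_circleMap]
    simp only [hg, smul_eq_mul, pf_eval, pf_derivative_indep, hnum]
  have hcm : Continuous fun q : Icc (0:ℝ) 1 × ℝ => circleMap 0 1 q.2 :=
    (continuous_circleMap 0 1).comp continuous_snd
  have hden_ne : ∀ q : Icc (0:ℝ) 1 × ℝ,
      (circleMap 0 1 q.2) ^ d - (h : ℂ) * (circleMap 0 1 q.2) ^ j + ((q.1 : ℝ) : ℂ) ≠ 0 := by
    intro q
    have habs : ‖circleMap 0 1 q.2‖ = 1 := by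
      simpa using norm_circleMap_zero 1 q.2
    have := pf_no_circle_root (d := d) (j := j) hh q.1.2.1 q.1.2.2 habs
    rwa [pf_eval] at this
  have huncurry : Continuous (Function.uncurry g) := by
    have h1 : Continuous fun q : Icc (0:ℝ) 1 × ℝ => circleMap 0 1 q.2 * I :=
      hcm.mul continuous_const
    have h2 : Continuous fun q : Icc (0:ℝ) 1 × ℝ => num (circleMap 0 1 q.2) :=
      (Polynomial.continuous _).comp hcm
    have h3 : Continuous fun q : Icc (0:ℝ) 1 × ℝ =>
        (circleMap 0 1 q.2) ^ d - (h : ℂ) * (circleMap 0 1 q.2) ^ j + ((q.1 : ℝ) : ℂ) := by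
      refine ((hcm.pow d).sub (continuous_const.mul (hcm.pow j))).add ?_
      exact Complex.continuous_ofReal.comp (continuous_subtype_val.comp continuous_fst)
    exact h1.mul (h2.div h3 hden_ne)
  have hcont : Continuous fun t : Icc (0:ℝ) 1 => ∫ θ in (0:ℝ)..(2 * Real.pi), g t θ :=
    intervalIntegral.continuous_parametric_intervalIntegral_of_continuous' huncurry _ _
  have h2pi : (2 * Real.pi * I : ℂ) ≠ 0 := by
    simp [Real.pi_ne_zero, I_ne_zero]
  have hNval : ∀ t : Icc (0:ℝ) 1, ((n t : ℕ) : ℂ) =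
      (2 * Real.pi * I)⁻¹ * ∫ θ in (0:ℝ)..(2 * Real.pi), g t θ := by
    intro t
    rw [hG t, pf_count_integral hjd hh t.2.1 t.2.2]
    field_simp
    rfl
  have hNc : Continuous fun t : Icc (0:ℝ) 1 => ((n t : ℕ) : ℂ) := by
    have : (fun t : Icc (0:ℝ) 1 => ((n t : ℕ) : ℂ)) =
        fun t => (2 * Real.pi * I)⁻¹ * ∫ θ in (0:ℝ)..(2 * Real.pi), g t θ :=
      funext hNval
    rw [this]
    exact continuous_const.mul hcont
  have hlc : IsLocallyConstant fun t : Icc (0:ℝ) 1 => n t := by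
    rw [IsLocallyConstant.iff_eventually_eq]
    intro x
    have hev : ∀ᶠ y : Icc (0:ℝ) 1 in nhds x, ((n ↑y : ℕ) : ℂ) ∈ Metric.ball ((n ↑x : ℕ) : ℂ) 1 :=
      (hNc.tendsto x).eventually_mem (Metric.ball_mem_nhds _ one_pos)
    refine hev.mono fun y hy => ?_
    by_contra hne
    have h1 : (1 : ℝ) ≤ dist ((n ↑y : ℕ) : ℂ) ((n ↑x : ℕ) : ℂ) := by
      rw [Complex.dist_eq]
      have : ((n ↑y : ℕ) : ℂ) - ((n ↑x : ℕ) : ℂ) = (((n ↑y : ℤ) - (n ↑x : ℤ) : ℤ) : ℂ) := by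
        push_cast; ring
      rw [this, Complex.norm_intCast, ← Int.cast_abs]
      have hzne : ((n ↑y : ℤ) - (n ↑x : ℤ)) ≠ 0 := by
        intro hc
        exact hne (by omega)
      exact_mod_cast Int.one_le_abs hzne
    rw [Metric.mem_ball] at hy
    linarith
  haveI : PreconnectedSpace (Icc (0:ℝ) 1) := Subtype.preconnectedSpace isPreconnected_Icc
  exact hlc.apply_eq_of_preconnectedSpace ⟨1, by norm_num⟩ ⟨0, by norm_num⟩

variable {d j : ℕ} {h : ℤ}

lemma habs3 (hh : 3 ≤ |h|) : (3 : ℝ) ≤ |(h : ℝ)| := by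
  rw [← Int.cast_abs]; exact_mod_cast hh

lemma pf_zero_count (hj : 0 < j) (hjd : j < d) (hh : 3 ≤ |h|) :
    Multiset.card ((pf d j h ((0 : ℝ) : ℂ)).roots.filter (fun r => ‖r‖ < 1)) = j := by
  classical
  have hfac : pf d j h ((0 : ℝ) : ℂ) = X ^ j * (X ^ (d - j) - C (h : ℂ)) := by
    rw [pf]
    rw [mul_sub, ← pow_add, Nat.add_sub_cancel' hjd.le, Complex.ofReal_zero, map_zero, add_zero, mul_comm]
  have hne : (X ^ j * ((X : ℂ[X]) ^ (d - j) - C (h : ℂ))) ≠ 0 := by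
    rw [← hfac]; exact (pf_monic hjd _).ne_zero
  rw [hfac, roots_mul hne, Multiset.filter_add, Multiset.card_add]
  have h1 : Multiset.card (((X : ℂ[X]) ^ j).roots.filter (fun r => ‖r‖ < 1)) = j := by
    rw [roots_X_pow, Multiset.nsmul_singleton]
    rw [Multiset.filter_eq_self.2 (by intro a ha; rw [Multiset.eq_of_mem_replicate ha]; simp)]
    simp
  have h2 : Multiset.card ((((X : ℂ[X]) ^ (d - j) - C (h : ℂ))).roots.filter
      (fun r => ‖r‖ < 1)) = 0 := by
    rw [Multiset.card_eq_zero, Multiset.filter_eq_nil]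
    intro r hr hlt
    have hroot : r ^ (d - j) = (h : ℂ) := by
      have := (mem_roots'.1 hr).2
      rw [IsRoot, eval_sub, eval_pow, eval_X, eval_C, sub_eq_zero] at this
      exact this
    have habs : (‖r‖) ^ (d - j) = |(h : ℝ)| := by
      rw [← norm_pow, hroot, Complex.norm_intCast]
    have hle : (‖r‖) ^ (d - j) ≤ 1 :=
      pow_le_one₀ (norm_nonneg r) hlt.le
    have := habs3 hh
    rw [habs] at hle
    linarith
  omega

-- rpow helpers
lemma rpow_inv_lt_iff {A x : ℝ} (hA : 0 < A) (hx : 0 ≤ x) {n : ℕ} (hn : n ≠ 0) :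
    A ^ ((n : ℝ)⁻¹) < x ↔ A < x ^ n := by
  have hn' : (0 : ℝ) < n := by positivity
  rw [← Real.rpow_lt_rpow_iff (Real.rpow_nonneg hA.le _) hx hn',
    Real.rpow_natCast, Real.rpow_natCast, Real.rpow_inv_natCast_pow hA.le hn]

lemma lt_rpow_inv_iff {A x : ℝ} (hA : 0 < A) (hx : 0 ≤ x) {n : ℕ} (hn : n ≠ 0) :
    x < A ^ ((n : ℝ)⁻¹) ↔ x ^ n < A := by
  have hn' : (0 : ℝ) < n := by positivity
  rw [← Real.rpow_lt_rpow_iff hx (Real.rpow_nonneg hA.le _) hn',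
    Real.rpow_natCast, Real.rpow_natCast, Real.rpow_inv_natCast_pow hA.le hn]

variable {d j : ℕ} {h : ℤ}

lemma root_ne_zero (hroot : (z : ℂ) ^ d - h * z ^ j + 1 = 0) (hj : 0 < j) (hjd : j < d) :
    z ≠ 0 := by
  intro hz
  rw [hz, zero_pow (by omega), zero_pow (by omega)] at hroot
  simp at hroot

lemma root_large {z : ℂ} (hj : 0 < j) (hjd : j < d)
    (hroot : z ^ d - h * z ^ j + 1 = 0) (hz : 1 < ‖z‖) :
    |(h : ℝ)| - 1 < (‖z‖) ^ (d - j) ∧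
      (‖z‖) ^ (d - j) < |(h : ℝ)| + 1 := by
  have hkey : z ^ j * (z ^ (d - j) - h) = -1 := by
    rw [mul_sub, ← pow_add, Nat.add_sub_cancel' hjd.le]
    linear_combination hroot
  have habs : (‖z‖) ^ j * ‖z ^ (d - j) - h‖ = 1 := by
    rw [← norm_pow, ← norm_mul, hkey]
    simp
  have h1j : 1 < (‖z‖) ^ j := one_lt_pow₀ hz hj.ne'
  have hsmall : ‖z ^ (d - j) - h‖ < 1 := by nlinarith [norm_nonneg (z ^ (d - j) - h)]
  have htri : |‖z ^ (d - j)‖ - ‖(h : ℂ)‖| ≤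
      ‖z ^ (d - j) - h‖ := abs_norm_sub_norm_le _ _
  rw [Complex.norm_intCast, norm_pow] at htri
  have := abs_lt.1 (lt_of_le_of_lt htri hsmall)
  constructor <;> linarith [this.1, this.2]

lemma root_small {z : ℂ} (hh : 3 ≤ |h|) (hj : 0 < j) (hjd : j < d)
    (hroot : z ^ d - h * z ^ j + 1 = 0) (hz : ‖z‖ < 1) (hz0 : z ≠ 0) :
    ((|(h : ℝ)| + 1))⁻¹ < (‖z‖) ^ j ∧
      (‖z‖) ^ j < ((|(h : ℝ)| - 1))⁻¹ := by
  have hH := habs3 (h := h) hh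
  set a := ‖z‖ with ha
  have ha0 : 0 < a := norm_pos_iff.2 hz0
  have hE : (h : ℂ) * z ^ j = 1 + z ^ d := by linear_combination -hroot
  have habs : |(h : ℝ)| * a ^ j = ‖1 + z ^ d‖ := by
    rw [← hE, norm_mul, Complex.norm_intCast, norm_pow]
  have hdj : a ^ d < a ^ j := pow_lt_pow_right_of_lt_one₀ ha0 hz hjd
  have hup : ‖1 + z ^ d‖ ≤ 1 + a ^ d := by
    refine le_trans (norm_add_le _ _) ?_
    rw [norm_one, norm_pow]
  have hlo : 1 - a ^ d ≤ ‖1 + z ^ d‖ := by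
    have h2 := norm_add_le (1 + z ^ d) (-(z ^ d))
    rw [add_neg_cancel_right, norm_one, norm_neg, norm_pow] at h2
    linarith
  have hja : 0 < a ^ j := pow_pos ha0 j
  constructor
  · rw [inv_lt_comm₀ (by linarith : (0:ℝ) < |(h : ℝ)| + 1) hja, ← one_div, div_lt_iff₀ hja]
    nlinarith
  · rw [lt_inv_comm₀ hja (by linarith : (0:ℝ) < |(h : ℝ)| - 1), ← one_div, lt_div_iff₀ hja]
    nlinarith

end family2

end TrinomialAux

open Polynomial in
/-- For integers `d > j > 0` and `|h| ≥ 3`, and any real `ε` with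
`1/|h| < ε < 1 - 1/|h|`, the polynomial `x^d - h x^j + 1` has exactly `d - j` roots
(with multiplicity) in the annulus `((1-ε)|h|)^{1/(d-j)} < |z| < ((1+ε)|h|)^{1/(d-j)}`
and exactly `j` roots in the annulus `((1+ε)|h|)^{-1/j} < |z| < ((1-ε)|h|)^{-1/j}`. -/
theorem trinomial_roots_annuli (d j : ℕ) (h : ℤ) (hj : 0 < j) (hjd : j < d)
    (hh : 3 ≤ |h|) (ε : ℝ) (hε1 : 1 / |(h : ℝ)| < ε) (hε2 : ε < 1 - 1 / |(h : ℝ)|) :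
    Multiset.card ((X ^ d - C (h : ℂ) * X ^ j + 1 : Polynomial ℂ).roots.filter
        (fun z => ((1 - ε) * |(h : ℝ)|) ^ (((d : ℝ) - (j : ℝ))⁻¹) < ‖z‖ ∧
          ‖z‖ < ((1 + ε) * |(h : ℝ)|) ^ (((d : ℝ) - (j : ℝ))⁻¹))) = d - j ∧
    Multiset.card ((X ^ d - C (h : ℂ) * X ^ j + 1 : Polynomial ℂ).roots.filter
        (fun z => ((1 + ε) * |(h : ℝ)|) ^ (-((j : ℝ)⁻¹)) < ‖z‖ ∧
          ‖z‖ < ((1 - ε) * |(h : ℝ)|) ^ (-((j : ℝ)⁻¹)))) = j := by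
  classical
  have hH3 : (3 : ℝ) ≤ |(h : ℝ)| := habs3 hh
  have hH0 : (0 : ℝ) < |(h : ℝ)| := by linarith
  have hεH1 : 1 < ε * |(h : ℝ)| := by
    rw [div_lt_iff₀ hH0] at hε1
    linarith
  have hεH2 : ε * |(h : ℝ)| < |(h : ℝ)| - 1 := by
    have h1 : ε * |(h : ℝ)| < (1 - 1 / |(h : ℝ)|) * |(h : ℝ)| :=
      mul_lt_mul_of_pos_right hε2 hH0
    rw [sub_mul, one_mul, div_mul_cancel₀ _ hH0.ne'] at h1
    exact h1
  have hA1 : 1 < (1 - ε) * |(h : ℝ)| := by nlinarith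
  have hAH : (1 - ε) * |(h : ℝ)| < |(h : ℝ)| - 1 := by nlinarith
  have hBH : |(h : ℝ)| + 1 < (1 + ε) * |(h : ℝ)| := by nlinarith
  have hA0 : (0 : ℝ) < (1 - ε) * |(h : ℝ)| := by linarith
  have hB0 : (0 : ℝ) < (1 + ε) * |(h : ℝ)| := by linarith
  have hm0 : d - j ≠ 0 := by omega
  have hmr : (d : ℝ) - (j : ℝ) = ((d - j : ℕ) : ℝ) := by
    push_cast [Nat.cast_sub hjd.le]
    ring
  have hmR : (0 : ℝ) < ((d - j : ℕ) : ℝ) := by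
    exact_mod_cast Nat.pos_of_ne_zero hm0
  have hjR : (0 : ℝ) < ((j : ℕ) : ℝ) := by exact_mod_cast hj
  have hp1 : (X ^ d - C (h : ℂ) * X ^ j + 1 : Polynomial ℂ) = pf d j h ((1 : ℝ) : ℂ) := by
    rw [pf]
    norm_num
  set T := (X ^ d - C (h : ℂ) * X ^ j + 1 : Polynomial ℂ).roots with hT
  have hroot_eq : ∀ z ∈ T, z ^ d - (h : ℂ) * z ^ j + 1 = 0 := by
    intro z hz
    have h2 := (mem_roots'.1 hz).2
    rw [IsRoot.def, hp1, pf_eval, Complex.ofReal_one] at h2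
    exact h2
  have hcard : Multiset.card T = d := by rw [hT, hp1]; exact pf_card_roots hjd _
  have hcount1 : Multiset.card (T.filter (fun z => ‖z‖ < 1)) = j := by
    rw [hT, hp1, pf_count_const hjd hh, pf_zero_count hj hjd hh]
  have hne1 : ∀ z ∈ T, ‖z‖ ≠ 1 := by
    intro z hz habs
    refine pf_no_circle_root (d := d) (j := j) hh zero_le_one le_rfl habs ?_
    rw [pf_eval, Complex.ofReal_one]
    exact hroot_eq z hz
  have hEq1 : ∀ z ∈ T,
      ((((1 - ε) * |(h : ℝ)|) ^ (((d : ℝ) - (j : ℝ))⁻¹) < ‖z‖ ∧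
        ‖z‖ < ((1 + ε) * |(h : ℝ)|) ^ (((d : ℝ) - (j : ℝ))⁻¹)) ↔
        1 < ‖z‖) := by
    intro z hz
    rw [hmr]
    constructor
    · rintro ⟨h1, -⟩
      have hgt1 : 1 < ((1 - ε) * |(h : ℝ)|) ^ (((d - j : ℕ) : ℝ)⁻¹) :=
        (Real.one_lt_rpow_iff_of_pos hA0).2 (Or.inl ⟨hA1, inv_pos.2 hmR⟩)
      linarith
    · intro h1
      obtain ⟨hl, hu⟩ := root_large hj hjd (hroot_eq z hz) h1
      constructor
      · rw [rpow_inv_lt_iff hA0 (norm_nonneg z) hm0]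
        linarith
      · rw [lt_rpow_inv_iff hB0 (norm_nonneg z) hm0]
        linarith
  have hEq2 : ∀ z ∈ T,
      ((((1 + ε) * |(h : ℝ)|) ^ (-((j : ℝ)⁻¹)) < ‖z‖ ∧
        ‖z‖ < ((1 - ε) * |(h : ℝ)|) ^ (-((j : ℝ)⁻¹))) ↔
        ‖z‖ < 1) := by
    intro z hz
    constructor
    · rintro ⟨-, h2⟩
      have hlt1 : ((1 - ε) * |(h : ℝ)|) ^ (-((j : ℝ)⁻¹)) < 1 :=
        Real.rpow_lt_one_of_one_lt_of_neg hA1 (neg_lt_zero.2 (inv_pos.2 hjR))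
      linarith
    · intro h1
      have hz0 : z ≠ 0 := root_ne_zero (hroot_eq z hz) hj hjd
      have ha0 : 0 < ‖z‖ := norm_pos_iff.2 hz0
      obtain ⟨hl, hu⟩ := root_small hh hj hjd (hroot_eq z hz) h1 hz0
      have hj0 : j ≠ 0 := hj.ne'
      constructor
      · rw [Real.rpow_neg hB0.le, inv_lt_comm₀ (Real.rpow_pos_of_pos hB0 _) ha0,
          lt_rpow_inv_iff hB0 (inv_nonneg.2 ha0.le) hj0, inv_pow,
          inv_lt_comm₀ (pow_pos ha0 j) hB0]
        have hinv : ((1 + ε) * |(h : ℝ)|)⁻¹ < (|(h : ℝ)| + 1)⁻¹ := by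
          rw [inv_lt_inv₀ hB0 (by linarith)]
          exact hBH
        linarith
      · rw [Real.rpow_neg hA0.le, lt_inv_comm₀ ha0 (Real.rpow_pos_of_pos hA0 _),
          rpow_inv_lt_iff hA0 (inv_nonneg.2 ha0.le) hj0, inv_pow,
          lt_inv_comm₀ hA0 (pow_pos ha0 j)]
        have hinv : (|(h : ℝ)| - 1)⁻¹ < ((1 - ε) * |(h : ℝ)|)⁻¹ := by
          rw [inv_lt_inv₀ (by linarith) hA0]
          exact hAH
        linarith
  have hfilter1 := Multiset.filter_congr hEq1
  have hfilter2 := Multiset.filter_congr hEq2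
  have hnotlt : T.filter (fun z => ¬ ‖z‖ < 1) =
      T.filter (fun z => 1 < ‖z‖) := by
    refine Multiset.filter_congr fun z hz => ?_
    constructor
    · intro hnl
      exact lt_of_le_of_ne (not_lt.1 hnl) (Ne.symm (hne1 z hz))
    · intro hlt
      exact not_lt.2 hlt.le
  have hcards : Multiset.card (T.filter (fun z => ‖z‖ < 1)) +
      Multiset.card (T.filter (fun z => ¬ ‖z‖ < 1)) = d := by
    rw [← Multiset.card_add, Multiset.filter_add_not, hcard]
  have hcount2 : Multiset.card (T.filter (fun z => 1 < ‖z‖)) = d - j := by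
    rw [← hnotlt]
    omega
  constructor
  · rw [hfilter1]
    exact hcount2
  · rw [hfilter2]
    exact hcount1
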